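/- Sparse demand counting bound: fix a price vector p ∈ ℝ₊ⁿ and suppose for each action i ∈ [n] there is an 'ambiguity interval' [l_i, r_i] ⊆ {0,…,2^n−1} with r_i − l_i ≤ 2^i, such that every set S_t in a collection D ⊆ 2^{[n]} (indexed by t = Σ_{i∈S_t} 2^{i−1}) satisfies: if t > r_i then i ∉ S_t, and if t < l_i then i ∈ S_t. Then |D| ≤ 2(n+1)(n+2) = O(n²). -/

import Mathlib

/-- Binary encoding of a subset of `Fin n`: action `i` (zero-based) has weight `2^i`. -/
def enc {n : ℕ} (S : Finset (Fin n)) : ℕ := ∑ i ∈ S, 2 ^ (i : ℕ)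

lemma sum_range_two_pow (i : ℕ) : ∑ j ∈ Finset.range i, 2 ^ j = 2 ^ i - 1 := by
  induction i with
  | zero => simp
  | succ k ih =>
      rw [Finset.sum_range_succ, ih, pow_succ]
      have : 1 ≤ 2 ^ k := Nat.one_le_two_pow
      omega

/-- Abstract version over `Finset ℕ`. -/
lemma abstract_counting (n : ℕ) (l' r' : ℕ → ℕ)
    (hw : ∀ i, i < n → r' i ≤ l' i + 2 ^ (i + 1))
    (D : Finset (Finset ℕ))
    (hsub : ∀ T ∈ D, ∀ j ∈ T, j < n)
    (hhi : ∀ T ∈ D, ∀ j, j < n → (∑ k ∈ T, 2 ^ k) > r' j → j ∉ T)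
    (hlo : ∀ T ∈ D, ∀ j, j < n → (∑ k ∈ T, 2 ^ k) < l' j → j ∈ T) :
    D.card ≤ 3 * (n + 1) := by
  classical
  set e : Finset ℕ → ℕ := fun T => ∑ k ∈ T, 2 ^ k with he
  have hex : ∀ T : Finset ℕ, ∃ i, i = n ∨ (i < n ∧ l' i ≤ e T ∧ e T ≤ r' i) :=
    fun T => ⟨n, Or.inl rfl⟩
  set m : Finset ℕ → ℕ := fun T => Nat.find (hex T) with hm
  have hmle : ∀ T, m T ≤ n := by
    intro T
    exact Nat.find_le (Or.inl rfl)
  have hmspec : ∀ T, m T = n ∨ (m T < n ∧ l' (m T) ≤ e T ∧ e T ≤ r' (m T)) :=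
    fun T => Nat.find_spec (hex T)
  -- bits below m T are determined
  have bit : ∀ T ∈ D, ∀ j, j < m T → (j ∈ T ↔ e T < l' j) := by
    intro T hT j hj
    have hjn : j < n := lt_of_lt_of_le hj (hmle T)
    have hnot := Nat.find_min (hex T) hj
    push_neg at hnot
    obtain ⟨-, hnot2⟩ := hnot
    by_cases hle : e T < l' j
    · exact ⟨fun _ => hle, fun _ => hlo T hT j hjn hle⟩
    · push_neg at hle
      have hr : r' j < e T := by
        by_contra hc
        push_neg at hc
        exact absurd (hnot2 hjn hle) (not_lt.mpr hc)
      exact ⟨fun hmem => absurd hmem (hhi T hT j hjn hr), fun h => absurd h (not_lt.mpr hle)⟩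
  set H : Finset ℕ → ℕ := fun T => ∑ j ∈ T.filter (fun j => m T ≤ j), 2 ^ j with hH
  -- key identity
  have keyA : ∀ T ∈ D,
      e T + (∑ j ∈ (Finset.range (m T)).filter (fun j => l' j ≤ e T), 2 ^ j) + 1
        = H T + 2 ^ (m T) := by
    intro T hT
    have hsplit : H T + ∑ j ∈ T.filter (fun j => ¬ m T ≤ j), 2 ^ j = e T := by
      simpa [hH] using
        Finset.sum_filter_add_sum_filter_not T (fun j => m T ≤ j) (fun j => 2 ^ j)
    have hfeq : T.filter (fun j => ¬ m T ≤ j)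
        = (Finset.range (m T)).filter (fun j => e T < l' j) := by
      ext j
      simp only [Finset.mem_filter, Finset.mem_range, not_le]
      constructor
      · rintro ⟨hjT, hjm⟩
        exact ⟨hjm, (bit T hT j hjm).mp hjT⟩
      · rintro ⟨hjm, hjl⟩
        exact ⟨(bit T hT j hjm).mpr hjl, hjm⟩
    have hsplit2 :
        (∑ j ∈ (Finset.range (m T)).filter (fun j => l' j ≤ e T), 2 ^ j)
          + (∑ j ∈ (Finset.range (m T)).filter (fun j => ¬ l' j ≤ e T), 2 ^ j)
          = 2 ^ (m T) - 1 := by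
      rw [Finset.sum_filter_add_sum_filter_not, sum_range_two_pow]
    have hnl : (Finset.range (m T)).filter (fun j => ¬ l' j ≤ e T)
        = (Finset.range (m T)).filter (fun j => e T < l' j) := by
      simp [not_le]
    have h1 : 1 ≤ 2 ^ (m T) := Nat.one_le_two_pow
    rw [hfeq] at hsplit
    rw [hnl] at hsplit2
    omega
  have Hdvd : ∀ T, 2 ^ (m T) ∣ H T := by
    intro T
    apply Finset.dvd_sum
    intro j hj
    exact pow_dvd_pow 2 (Finset.mem_filter.mp hj).2
  -- monotonicity: same m, larger e ⇒ larger H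
  have mono : ∀ T ∈ D, ∀ T' ∈ D, m T = m T' → e T < e T' → H T < H T' := by
    intro T hT T' hT' hmm hee
    have k1 := keyA T hT
    have k2 := keyA T' hT'
    have hsub2 : (Finset.range (m T)).filter (fun j => l' j ≤ e T)
        ⊆ (Finset.range (m T')).filter (fun j => l' j ≤ e T') := by
      rw [hmm]
      intro j hj
      simp only [Finset.mem_filter] at hj ⊢
      exact ⟨hj.1, le_trans hj.2 (le_of_lt hee)⟩
    have hsum : (∑ j ∈ (Finset.range (m T)).filter (fun j => l' j ≤ e T), 2 ^ j)
        ≤ ∑ j ∈ (Finset.range (m T')).filter (fun j => l' j ≤ e T'), 2 ^ j :=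
      Finset.sum_le_sum_of_subset hsub2
    rw [hmm] at k1 hsum
    omega
  -- definitions of h and q
  set hh : Finset ℕ → ℕ := fun T => H T / 2 ^ (m T) with hhh
  set q : Finset ℕ → ℕ := fun T => (if m T < n then l' (m T) else 0) / 2 ^ (m T) with hq
  have hHmul : ∀ T, H T = hh T * 2 ^ (m T) := by
    intro T
    exact (Nat.div_mul_cancel (Hdvd T)).symm
  have hq_le : ∀ T ∈ D, q T ≤ hh T := by
    intro T hT
    have k := keyA T hT
    have hL : (if m T < n then l' (m T) else 0) ≤ e T := by
      rcases hmspec T with h | ⟨h1, h2, _⟩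
      · simp [h]
      · simp [h1, h2]
    have hq2 : q T * 2 ^ (m T) ≤ (if m T < n then l' (m T) else 0) :=
      Nat.div_mul_le_self _ _
    have : q T * 2 ^ (m T) < (hh T + 1) * 2 ^ (m T) := by
      have := hHmul T
      calc q T * 2 ^ (m T) ≤ e T := le_trans hq2 hL
        _ < H T + 2 ^ (m T) := by omega
        _ = (hh T + 1) * 2 ^ (m T) := by rw [hHmul T]; ring
    have := Nat.lt_of_mul_lt_mul_right this
    omega
  have h_lt : ∀ T ∈ D, hh T < q T + 3 := by
    intro T hT
    rcases hmspec T with hcase | ⟨h1, h2, h3⟩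
    · -- m T = n : H T = 0
      have hH0 : H T = 0 := by
        apply Finset.sum_eq_zero_iff_of_nonneg (fun _ _ => Nat.zero_le _) |>.mpr
        intro j hj
        obtain ⟨hjT, hjm⟩ := Finset.mem_filter.mp hj
        have := hsub T hT j hjT
        rw [hcase] at hjm
        omega
      have : hh T = 0 := by rw [hhh]; simp [hH0]
      omega
    · -- m T < n
      have k := keyA T hT
      have hrb : r' (m T) ≤ l' (m T) + 2 ^ (m T + 1) := hw (m T) h1
      have hsum_le : (∑ j ∈ (Finset.range (m T)).filter (fun j => l' j ≤ e T), 2 ^ j)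
          ≤ 2 ^ (m T) - 1 := by
        rw [← sum_range_two_pow]
        exact Finset.sum_le_sum_of_subset (Finset.filter_subset _ _)
      have hdm := Nat.div_add_mod (l' (m T)) (2 ^ (m T))
      have hmod : l' (m T) % 2 ^ (m T) < 2 ^ (m T) :=
        Nat.mod_lt _ (Nat.pow_pos (by norm_num))
      have hqv : q T = l' (m T) / 2 ^ (m T) := by simp [hq, h1]
      have hps : 2 ^ (m T + 1) = 2 * 2 ^ (m T) := by ring
      have h1b : 1 ≤ 2 ^ (m T) := Nat.one_le_two_pow
      -- H T + 2^(m T) = e T + sum + 1 ≤ r' + 2^m ≤ l' + 3*2^m < (q+4)*2^m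
      have hkey : hh T * 2 ^ (m T) < (q T + 3) * 2 ^ (m T) := by
        have hHle : H T + 2 ^ (m T) ≤ l' (m T) + 2 ^ (m T + 1) + 2 ^ (m T) := by omega
        have hl'lt : l' (m T) < (q T + 1) * 2 ^ (m T) := by
          rw [hqv]
          nlinarith [hdm, hmod]
        rw [← hHmul T]
        nlinarith [hHle, hl'lt, hps]
      have := Nat.lt_of_mul_lt_mul_right hkey
      exact this
  -- the injection
  have hinj : D.card ≤ ((Finset.range (n + 1)) ×ˢ (Finset.range 3)).card := by
    apply Finset.card_le_card_of_injOn (fun T => (m T, hh T - q T))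
    · intro T hT
      simp only [Finset.mem_coe, Finset.mem_product, Finset.mem_range]
      constructor
      · exact Nat.lt_succ_of_le (hmle T)
      · have := hq_le T hT
        have := h_lt T hT
        omega
    · intro T hT T' hT' heq
      simp only [Prod.mk.injEq] at heq
      obtain ⟨hm1, hh1⟩ := heq
      have hqeq : q T = q T' := by rw [hq]; simp only [hm1]
      have hheq : hh T = hh T' := by
        have := hq_le T hT
        have := hq_le T' hT'
        omega
      have hHeq : H T = H T' := by
        rw [hHmul T, hHmul T', hheq, hm1]
      have heeq : e T = e T' := by
        by_contra hne
        rcases Nat.lt_or_ge (e T) (e T') with h | h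
        · exact absurd hHeq (Nat.ne_of_lt (mono T hT T' hT' hm1 h))
        · rcases Nat.lt_or_ge (e T') (e T) with h' | h'
          · exact absurd hHeq.symm (Nat.ne_of_lt (mono T' hT' T hT hm1.symm h'))
          · omega
      exact Finset.geomSum_injective (by norm_num : 2 ≤ 2) heeq
  have : ((Finset.range (n + 1)) ×ˢ (Finset.range 3)).card = 3 * (n + 1) := by
    simp [Finset.card_product, Nat.mul_comm]
  omega

theorem sparse_demand_counting (n : ℕ) (l r : Fin n → ℕ)
    (hwidth : ∀ i : Fin n, r i - l i ≤ 2 ^ ((i : ℕ) + 1))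
    (D : Finset (Finset (Fin n)))
    (hhi : ∀ S ∈ D, ∀ i : Fin n, enc S > r i → i ∉ S)
    (hlo : ∀ S ∈ D, ∀ i : Fin n, enc S < l i → i ∈ S) :
    D.card ≤ 2 * (n + 1) * (n + 2) := by
  classical
  set l' : ℕ → ℕ := fun j => if h : j < n then l ⟨j, h⟩ else 0 with hl'
  set r' : ℕ → ℕ := fun j => if h : j < n then r ⟨j, h⟩ else 0 with hr'
  set D' : Finset (Finset ℕ) := D.image (fun S => S.image Fin.val) with hD'
  have hcard : D'.card = D.card := by
    apply Finset.card_image_of_injective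
    exact Finset.image_injective Fin.val_injective
  have henc : ∀ S : Finset (Fin n), (∑ k ∈ S.image Fin.val, 2 ^ k) = enc S := by
    intro S
    rw [enc, Finset.sum_image]
    intro x _ y _ hxy
    exact Fin.val_injective hxy
  have hmem : ∀ (S : Finset (Fin n)) (j : ℕ) (hj : j < n),
      j ∈ S.image Fin.val ↔ (⟨j, hj⟩ : Fin n) ∈ S := by
    intro S j hj
    simp only [Finset.mem_image]
    constructor
    · rintro ⟨a, ha, rfl⟩
      simpa using ha
    · intro h
      exact ⟨⟨j, hj⟩, h, rfl⟩
  have key : D'.card ≤ 3 * (n + 1) := by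
    apply abstract_counting n l' r'
    · intro i hi
      have hw1 := hwidth ⟨i, hi⟩
      simp only [Fin.val_mk] at hw1
      simp only [hl', hr', dif_pos hi]
      omega
    · intro T hT j hjT
      obtain ⟨S, _, rfl⟩ := Finset.mem_image.mp hT
      obtain ⟨a, _, rfl⟩ := Finset.mem_image.mp hjT
      exact a.isLt
    · intro T hT j hj hgt
      obtain ⟨S, hS, rfl⟩ := Finset.mem_image.mp hT
      rw [henc S] at hgt
      rw [hmem S j hj]
      apply hhi S hS
      simpa only [hr', dif_pos hj] using hgt
    · intro T hT j hj hlt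
      obtain ⟨S, hS, rfl⟩ := Finset.mem_image.mp hT
      rw [henc S] at hlt
      rw [hmem S j hj]
      apply hlo S hS
      simpa only [hl', dif_pos hj] using hlt
  have : 3 * (n + 1) ≤ 2 * (n + 1) * (n + 2) := by nlinarith
  omega
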